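/- Let E be a finite totally ordered set and d ≥ 1. Let χ be a chirotope of rank d on E and I an initial datum, and suppose D̃(χ,I) is nonempty. Then the map L : ℝ^{binom(E,d)} → 𝕋^{binom(E,d)} applying x ↦ −log|x| componentwise (with −log 0 = ∞) restricts to a homeomorphism from D̃(χ,I) onto C(|χ|,I), where |χ|(B) = |χ(B)|, 𝕋 carries the topology making x ↦ e^{−x} a homeomorphism onto [0,∞), and both sides carry the subspace topologies. -/
import Mathlib


open Finset

noncomputable section

/-! ### Alternating functions and oriented tropical Plücker vectors -/

/-- A function `Φ : E^d → ℝ` is alternating. -/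
def IsAlternating {E : Type*} {d : ℕ} (Φ : (Fin d → E) → ℝ) : Prop :=
  (∀ (σ : Equiv.Perm (Fin d)) (x : Fin d → E),
      Φ (x ∘ σ) = ((Equiv.Perm.sign σ : ℤ) : ℝ) * Φ x) ∧
  ∀ x : Fin d → E, ¬ Function.Injective x → Φ x = 0

/-- The `i`-th term `(-1)^i · Φ(x₁,…,x̂ᵢ,…,x_{d+1}) · Φ(xᵢ,y₁,…,y_{d-1})` of the
oriented (tropical) Plücker relation attached to tuples `X ∈ E^{d+1}`, `Y ∈ E^{d-1}`. -/
def delTerm {E : Type*} {d n : ℕ} (hn : d = n + 1) (Φ : (Fin d → E) → ℝ)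
    (X : Fin (d + 1) → E) (Y : Fin n → E) (i : Fin (d + 1)) : ℝ :=
  (-1 : ℝ) ^ (i : ℕ) * Φ (X ∘ i.succAbove) * Φ (Fin.cons (X i) Y ∘ Fin.cast hn)

/-- `Φ : E^d → ℝ` is an oriented tropical Plücker vector of rank `d` on `E`:
it is alternating, not identically zero, and for every `X ∈ E^{d+1}`, `Y ∈ E^{d-1}`
the list of terms of the Plücker relation is identically zero or its maximum absolute
value is attained both at a positive entry and at a negative entry. -/
def IsOrientedTP {E : Type*} (d : ℕ) (Φ : (Fin d → E) → ℝ) : Prop :=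
  IsAlternating Φ ∧ (∃ x, Φ x ≠ 0) ∧
  ∀ (n : ℕ) (hn : d = n + 1) (X : Fin (d + 1) → E) (Y : Fin n → E),
    (∀ i, delTerm hn Φ X Y i = 0) ∨
    ∃ ip im : Fin (d + 1),
      0 < delTerm hn Φ X Y ip ∧ delTerm hn Φ X Y im < 0 ∧
      (∀ k, |delTerm hn Φ X Y k| ≤ delTerm hn Φ X Y ip) ∧
      ∀ k, |delTerm hn Φ X Y k| ≤ -delTerm hn Φ X Y im

/-- `M̃(d,E)`: the space of oriented tropical Plücker vectors of rank `d` on `E`,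
as a subset of `ℝ^{E^d}`. -/
def Mt (d : ℕ) (E : Type*) : Set ((Fin d → E) → ℝ) := {Φ | IsOrientedTP d Φ}

open Classical in
/-- Pushforward of `Φ : E^d → ℝ` along an (injective) map `α : E → F`. -/
noncomputable def pushforward {E F : Type*} {d : ℕ} (α : E → F) (Φ : (Fin d → E) → ℝ) :
    (Fin d → F) → ℝ :=
  fun y => if h : ∃ x : Fin d → E, ∀ i, y i = α (x i) then Φ h.choose else 0

/-! ### Finsets, ordered tuples, evaluation -/

/-- The increasing enumeration of a `d`-element finite subset of a linearly ordered set. -/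
def finsetTuple {E : Type*} [LinearOrder E] {d : ℕ} (B : Finset E) (h : B.card = d) :
    Fin d → E :=
  fun i => (B.orderIsoOfFin h i : E)

/-- Evaluation of an alternating function on a finite set, via its increasing enumeration
(and `0` if the set does not have the right cardinality). -/
noncomputable def evalOn {E : Type*} [LinearOrder E] {d : ℕ} (χ : (Fin d → E) → ℝ)
    (B : Finset E) : ℝ :=
  if h : B.card = d then χ (finsetTuple B h) else 0

/-! ### Tropical numbers and valuated matroids -/

/-- `−log|x| ∈ 𝕋 = ℝ ∪ {∞}` (with `−log 0 = ∞`). -/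
noncomputable def negLogAbs (x : ℝ) : WithTop ℝ :=
  if x = 0 then ⊤ else ((- Real.log |x| : ℝ) : WithTop ℝ)

/-- The map `𝕋 → ℝ`, `x ↦ e^{−x}` (with `∞ ↦ 0`); it is injective with image `[0,∞)`,
so the topology on `𝕋` making it a homeomorphism onto `[0,∞)` is the topology induced by it. -/
noncomputable def tropToReal : WithTop ℝ → ℝ :=
  WithTop.recTopCoe 0 fun r => Real.exp (-r)

/-- `I_φ(X,Y)`: the set of `i ∈ X \ Y` attaining the minimum of `φ(X∖{i}) + φ(Y∪{i})`. -/
def argminSet {E : Type*} [DecidableEq E] (φ : Finset E → WithTop ℝ) (X Y : Finset E) :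
    Set E :=
  {i | i ∈ X \ Y ∧ ∀ j ∈ X \ Y,
    φ (X.erase i) + φ (insert i Y) ≤ φ (X.erase j) + φ (insert j Y)}

/-- `φ` is a tropical Plücker vector of rank `d`: not identically `∞` on `binom(E,d)`,
and each `I_φ(X,Y)` has cardinality at least `2`. -/
def IsTropPlucker {E : Type*} [DecidableEq E] (d : ℕ) (φ : Finset E → WithTop ℝ) : Prop :=
  (∃ B : Finset E, B.card = d ∧ φ B ≠ ⊤) ∧
  ∀ X Y : Finset E, X.card = d + 1 → Y.card = d - 1 →
    ∃ i ∈ argminSet φ X Y, ∃ j ∈ argminSet φ X Y, i ≠ j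

/-- The (tropical) Plücker coordinates `B ↦ −log|Φ(B)|` of `Φ`. -/
noncomputable def tropOf {E : Type*} [LinearOrder E] {d : ℕ} (Φ : (Fin d → E) → ℝ) :
    Finset E → WithTop ℝ :=
  fun B => negLogAbs (evalOn Φ B)

/-! ### Chirotopes -/

/-- A chirotope of rank `d` on `E`: an alternating `{−1,0,+1}`-valued function,
not identically zero, satisfying the chirotope exchange condition. -/
def IsChirotope {E : Type*} (d : ℕ) (χ : (Fin d → E) → ℝ) : Prop :=
  (∀ x, χ x = -1 ∨ χ x = 0 ∨ χ x = 1) ∧ IsAlternating χ ∧ (∃ x, χ x ≠ 0) ∧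
  ∀ (n : ℕ) (hn : d = n + 1) (X : Fin (d + 1) → E) (Y : Fin n → E),
    (∀ k, delTerm hn χ X Y k = 0) ∨
    ((∃ k, delTerm hn χ X Y k = 1) ∧ ∃ k, delTerm hn χ X Y k = -1)

/-- Compatibility of a chirotope `χ` with a tropical Plücker vector `φ`:
`φ(B) = ∞` iff `χ(B) = 0`, and for every `X ∈ binom(E,d+1)`, `Y ∈ binom(E,d-1)`
(listed in increasing order) there exist indices `i, j` in the argmin set such that the
corresponding chirotope terms have opposite signs. -/
def ChiCompat {E : Type*} [LinearOrder E] (d : ℕ) (χ : (Fin d → E) → ℝ)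
    (φ : Finset E → WithTop ℝ) : Prop :=
  (∀ B : Finset E, B.card = d → (φ B = ⊤ ↔ evalOn χ B = 0)) ∧
  ∀ (n : ℕ) (hn : d = n + 1) (X Y : Finset E) (hX : X.card = d + 1) (hY : Y.card = n),
    ∃ i j : Fin (d + 1),
      (∀ k : Fin (d + 1),
        φ (X.erase (finsetTuple X hX i)) + φ (insert (finsetTuple X hX i) Y) ≤
          φ (X.erase (finsetTuple X hX k)) + φ (insert (finsetTuple X hX k) Y)) ∧
      (∀ k : Fin (d + 1),
        φ (X.erase (finsetTuple X hX j)) + φ (insert (finsetTuple X hX j) Y) ≤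
          φ (X.erase (finsetTuple X hX k)) + φ (insert (finsetTuple X hX k) Y)) ∧
      0 < delTerm hn χ (finsetTuple X hX) (finsetTuple Y hY) i ∧
      delTerm hn χ (finsetTuple X hX) (finsetTuple Y hY) j < 0

/-! ### The cells `C(p,I)` of the Dressian -/

/-- Membership in the cell `C(p,I)`: a tropical Plücker vector with underlying matroid `p`
and initial datum `I`. -/
def IsInC {E : Type*} [DecidableEq E] (d : ℕ) (p : Finset E → Bool)
    (I : Finset E → Finset E → Set E) (φ : Finset E → WithTop ℝ) : Prop :=
  IsTropPlucker d φ ∧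
  (∀ B : Finset E, B.card = d → (p B = true ↔ φ B ≠ ⊤)) ∧
  ∀ X Y : Finset E, X.card = d + 1 → Y.card = d - 1 → argminSet φ X Y = I X Y

/-- The support (set of bases) of a matroid `p : binom(E,d) → {0,1}`. -/
def suppSet {E : Type*} (d : ℕ) (p : Finset E → Bool) : Set (Finset E) :=
  {B | B.card = d ∧ p B = true}

open Classical in
/-- Extend a vector of finite coordinates on `supp(p)` to all of `binom(E,d)` by `∞`. -/
noncomputable def extendFin {E : Type*} (d : ℕ) (p : Finset E → Bool)
    (f : ↥(suppSet d p) → ℝ) : Finset E → WithTop ℝ :=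
  fun B => if h : B ∈ suppSet d p then ((f ⟨B, h⟩ : ℝ) : WithTop ℝ) else ⊤

/-- The cell `C(p,I)`, identified with a subset of `ℝ^{supp(p)}` by recording the finite
coordinates. -/
def CRealCoords {E : Type*} [DecidableEq E] (d : ℕ) (p : Finset E → Bool)
    (I : Finset E → Finset E → Set E) : Set (↥(suppSet d p) → ℝ) :=
  {f | IsInC d p I (extendFin d p f)}

/-- Extend `φ : binom(E,d) → 𝕋` to all finite subsets by `∞`. -/
noncomputable def extendTrop {E : Type*} (d : ℕ)
    (φ : {B : Finset E // B.card = d} → WithTop ℝ) : Finset E → WithTop ℝ :=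
  fun B => if h : B.card = d then φ ⟨B, h⟩ else ⊤

/-- The cell `C(p,I)` as a subset of `𝕋^{binom(E,d)}`. -/
def Cset {E : Type*} [DecidableEq E] (d : ℕ) (p : Finset E → Bool)
    (I : Finset E → Finset E → Set E) : Set ({B : Finset E // B.card = d} → WithTop ℝ) :=
  {φ | IsInC d p I (extendTrop d φ)}

/-- The set of tropical Plücker vectors inside `𝕋^{binom(E,d)}`. -/
def TPVset {E : Type*} [DecidableEq E] (d : ℕ) :
    Set ({B : Finset E // B.card = d} → WithTop ℝ) :=
  {φ | IsTropPlucker d (extendTrop d φ)}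

/-! ### Cells of the space of oriented valuated matroids -/

/-- The cell `D̃(χ,I)`: oriented tropical Plücker vectors with chirotope `χ` and
initial datum `I`. -/
def Dset {E : Type*} [LinearOrder E] (d : ℕ) (χ : (Fin d → E) → ℝ)
    (I : Finset E → Finset E → Set E) : Set ((Fin d → E) → ℝ) :=
  {Φ | IsOrientedTP d Φ ∧ (∀ x, Real.sign (Φ x) = χ x) ∧
    ∀ X Y : Finset E, X.card = d + 1 → Y.card = d - 1 → argminSet (tropOf Φ) X Y = I X Y}

/-- The Plücker coordinates of an alternating function, indexed by `binom(E,d)`. -/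
def toCoords {E : Type*} [LinearOrder E] (d : ℕ) (Φ : (Fin d → E) → ℝ) :
    {B : Finset E // B.card = d} → ℝ :=
  fun B => Φ (finsetTuple B.1 B.2)

/-- The cell `D̃(χ,I)` inside `ℝ^{binom(E,d)}`. -/
def DsetCoords {E : Type*} [LinearOrder E] (d : ℕ) (χ : (Fin d → E) → ℝ)
    (I : Finset E → Finset E → Set E) : Set ({B : Finset E // B.card = d} → ℝ) :=
  toCoords d '' Dset d χ I

/-- `M̃(d,E)` inside `ℝ^{binom(E,d)}`. -/
def MtCoords {E : Type*} [LinearOrder E] (d : ℕ) :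
    Set ({B : Finset E // B.card = d} → ℝ) :=
  toCoords d '' Mt d E

open Classical in
/-- The underlying matroid `|χ|` of a chirotope, as `binom(E,d) → {0,1}`. -/
noncomputable def chiSupp {E : Type*} [LinearOrder E] {d : ℕ} (χ : (Fin d → E) → ℝ) :
    Finset E → Bool :=
  fun B => if evalOn χ B = 0 then false else true

/-- Compatibility of an initial datum `I` with a chirotope `χ`. -/
def InitCompat {E : Type*} [LinearOrder E] (d : ℕ)
    (I : Finset E → Finset E → Set E) (χ : (Fin d → E) → ℝ) : Prop :=
  (∃ φ : Finset E → WithTop ℝ, IsTropPlucker d φ ∧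
      (∀ B : Finset E, B.card = d → (φ B ≠ ⊤ ↔ evalOn χ B ≠ 0)) ∧
      ∀ X Y : Finset E, X.card = d + 1 → Y.card = d - 1 → argminSet φ X Y = I X Y) ∧
  ∀ (n : ℕ) (hn : d = n + 1) (X Y : Finset E) (hX : X.card = d + 1) (hY : Y.card = n),
    (∀ k, delTerm hn χ (finsetTuple X hX) (finsetTuple Y hY) k = 0) ∨
    ∃ kp km : Fin (d + 1),
      finsetTuple X hX kp ∈ I X Y ∧ finsetTuple X hX km ∈ I X Y ∧
      delTerm hn χ (finsetTuple X hX) (finsetTuple Y hY) kp = 1 ∧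
      delTerm hn χ (finsetTuple X hX) (finsetTuple Y hY) km = -1

/-- The maximal initial datum `I_max^χ` compatible with a chirotope `χ`. -/
def Imax {E : Type*} [LinearOrder E] (d : ℕ) (χ : (Fin d → E) → ℝ) :
    Finset E → Finset E → Set E :=
  fun X Y => {x | x ∈ X \ Y ∧ |evalOn χ (X.erase x)| * |evalOn χ (insert x Y)| ≠ 0}

/-! ### The MacPhersonian as a preordered set -/

/-- `τ` is a specialization of `χ`: each Plücker coordinate of `τ` is the corresponding
coordinate of `χ` or `0`. -/
def SpecRel {E : Type*} [LinearOrder E] (d : ℕ) (χ τ : (Fin d → E) → ℝ) : Prop :=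
  ∀ B : Finset E, B.card = d → evalOn τ B = evalOn χ B ∨ evalOn τ B = 0

/-- The equivalence `χ ∼ −χ` on functions `E^d → ℝ`. -/
def ChiSetoid (E : Type*) (d : ℕ) : Setoid ((Fin d → E) → ℝ) where
  r χ τ := τ = χ ∨ τ = -χ
  iseqv := by
    refine ⟨fun x => Or.inl rfl, ?_, ?_⟩
    · rintro x y (rfl | rfl)
      · exact Or.inl rfl
      · exact Or.inr (neg_neg x).symm
    · rintro x y z (rfl | rfl) (rfl | rfl)
      · exact Or.inl rfl
      · exact Or.inr rfl
      · exact Or.inr rfl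
      · exact Or.inl (neg_neg x)

/-- The MacPhersonian: elements are equivalence classes `[χ]` of chirotopes of rank `d` on
`E` under `χ ∼ −χ`. -/
def MacP (E : Type*) (d : ℕ) : Type _ :=
  {q : Quotient (ChiSetoid E d) // ∃ χ, IsChirotope d χ ∧ Quotient.mk (ChiSetoid E d) χ = q}

lemma evalOn_neg {E : Type*} [LinearOrder E] {d : ℕ} (χ : (Fin d → E) → ℝ) (B : Finset E) :
    evalOn (-χ) B = -evalOn χ B := by
  unfold evalOn
  split <;> simp

/-- The specialization preorder on the MacPhersonian. -/
instance MacP.instPreorder (E : Type*) [LinearOrder E] (d : ℕ) : Preorder (MacP E d) where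
  le x y := ∃ a b : (Fin d → E) → ℝ,
    Quotient.mk (ChiSetoid E d) a = x.1 ∧ Quotient.mk (ChiSetoid E d) b = y.1 ∧ SpecRel d a b
  le_refl x := by
    obtain ⟨χ, hχ, hq⟩ := x.2
    exact ⟨χ, χ, hq, hq, fun B _ => Or.inl rfl⟩
  le_trans x y z hxy hyz := by
    obtain ⟨a, b, ha, hb, hab⟩ := hxy
    obtain ⟨b', c, hb', hc, hbc⟩ := hyz
    have comp : ∀ {u v w : (Fin d → E) → ℝ}, SpecRel d u v → SpecRel d v w → SpecRel d u w := by
      intro u v w h1 h2 B hB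
      rcases h2 B hB with h | h
      · rw [h]; exact h1 B hB
      · exact Or.inr h
    have hneg : ∀ {u v : (Fin d → E) → ℝ}, SpecRel d u v → SpecRel d (-u) (-v) := by
      intro u v h B hB
      rw [evalOn_neg, evalOn_neg]
      rcases h B hB with h1 | h1
      · exact Or.inl (by rw [h1])
      · exact Or.inr (by rw [h1, neg_zero])
    have hbb' : b = b' ∨ b = -b' := Quotient.exact (hb'.trans hb.symm)
    rcases hbb' with h | h
    · subst h
      exact ⟨a, c, ha, hc, comp hab hbc⟩
    · have h1 : SpecRel d b (-c) := by
        have := hneg hbc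
        rwa [← h] at this
      refine ⟨a, -c, ha, ?_, comp hab h1⟩
      rw [← hc]
      exact Quotient.sound (Or.inr (neg_neg c).symm)

/-! ### Projectivizations -/

/-- The scaling equivalence on a subset `S ⊆ ℝ^ι`. -/
def scalingSetoid {ι : Type*} (S : Set (ι → ℝ)) : Setoid ↥S where
  r f g := ∃ c : ℝ, c ≠ 0 ∧ (g : ι → ℝ) = c • (f : ι → ℝ)
  iseqv := by
    refine ⟨fun f => ⟨1, one_ne_zero, (one_smul ℝ _).symm⟩, ?_, ?_⟩
    · rintro f g ⟨c, hc, h⟩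
      exact ⟨c⁻¹, inv_ne_zero hc, by rw [h, smul_smul, inv_mul_cancel₀ hc, one_smul]⟩
    · rintro f g h ⟨c, hc, h1⟩ ⟨c', hc', h2⟩
      exact ⟨c' * c, mul_ne_zero hc' hc, by rw [h2, h1, smul_smul]⟩

/-! ### Matroids on the ground set ℕ -/

/-- `Φ : ℕ^d → ℝ` is finitely supported. -/
def FinSupp (d : ℕ) (Φ : (Fin d → ℕ) → ℝ) : Prop :=
  ∃ S : Finset ℕ, ∀ x : Fin d → ℕ, (∃ i, x i ∉ S) → Φ x = 0

/-- `M̃(d,ℕ)`: finitely supported oriented tropical Plücker vectors of rank `d` on `ℕ`. -/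
def MtN (d : ℕ) : Set ((Fin d → ℕ) → ℝ) := {Φ | IsOrientedTP d Φ ∧ FinSupp d Φ}

/-- `M(d,ℕ)`: the projectivization of `M̃(d,ℕ)`, with the quotient topology. -/
abbrev MprojN (d : ℕ) := Quotient (scalingSetoid (MtN d))

/-- Transport along an equality of ranks. -/
def recast {m n : ℕ} (h : m = n) (Φ : (Fin m → ℕ) → ℝ) : (Fin n → ℕ) → ℝ :=
  fun y => Φ (y ∘ Fin.cast h)

/-! ### Matroid sliding -/

open Classical in
/-- The slide `Φ_t^A` of `Φ` along a tuple `A` of injective maps `E → F` with pairwise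
disjoint images, at a point `t` of the standard simplex. -/
noncomputable def slide {E F : Type*} {d n : ℕ} (A : Fin (n + 1) → E → F)
    (t : Fin (n + 1) → ℝ) (Φ : (Fin d → E) → ℝ) : (Fin d → F) → ℝ :=
  fun x =>
    if h : ∀ i, ∃ k e, x i = A k e then
      Φ (fun i => (h i).choose_spec.choose) *
        ∏ k : Fin (n + 1), t k ^ (Finset.univ.filter fun i : Fin d => ∃ e, x i = A k e).card
    else 0

/-! ### Direct sums -/

/-- `D` is the direct sum `Φ₁ ⊕ Φ₂`: the unique alternating function on
`(E₁ ⊔ E₂)^{d₁+d₂}` vanishing on tuples not having exactly `d₁` entries from `E₁` and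
`d₂` entries from `E₂`, and restricting to `(x,y) ↦ Φ₁(x)·Φ₂(y)` on `E₁^{d₁} × E₂^{d₂}`. -/
def IsDirectSum {E₁ E₂ : Type*} {d₁ d₂ : ℕ} (Φ₁ : (Fin d₁ → E₁) → ℝ)
    (Φ₂ : (Fin d₂ → E₂) → ℝ) (D : (Fin (d₁ + d₂) → E₁ ⊕ E₂) → ℝ) : Prop :=
  IsAlternating D ∧
  (∀ z : Fin (d₁ + d₂) → E₁ ⊕ E₂,
      ¬ ((Finset.univ.filter fun i => (z i).isLeft = true).card = d₁ ∧
          (Finset.univ.filter fun i => (z i).isRight = true).card = d₂) → D z = 0) ∧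
  ∀ (x : Fin d₁ → E₁) (y : Fin d₂ → E₂),
    D (Sum.elim (fun a => Sum.inl (x a)) (fun b => Sum.inr (y b)) ∘ finSumFinEquiv.symm) =
      Φ₁ x * Φ₂ y

/-! ### Tropical projective space -/

private lemma trop_add_cancel (w : WithTop ℝ) (lam : ℝ) :
    w = w + (lam : WithTop ℝ) + ((-lam : ℝ) : WithTop ℝ) := by
  induction w using WithTop.recTopCoe with
  | top => simp
  | coe r => rw [← WithTop.coe_add, ← WithTop.coe_add, WithTop.coe_inj]; ring

/-- The action of `(ℝ,+)` on `𝕋^n ∖ {(∞,…,∞)}` by simultaneous translation. -/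
def tropProjSetoid (n : ℕ) : Setoid {x : Fin n → WithTop ℝ // ∃ i, x i ≠ ⊤} where
  r x y := ∃ lam : ℝ, ∀ i, (y : Fin n → WithTop ℝ) i = x.1 i + (lam : WithTop ℝ)
  iseqv := by
    refine ⟨fun x => ⟨0, fun i => by simp⟩, ?_, ?_⟩
    · rintro x y ⟨lam, h⟩
      refine ⟨-lam, fun i => ?_⟩
      rw [h i]
      exact trop_add_cancel _ _
    · rintro x y z ⟨lam, h1⟩ ⟨mu, h2⟩
      refine ⟨lam + mu, fun i => ?_⟩
      rw [h2 i, h1 i, WithTop.coe_add, add_assoc]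

end


/-! ## Helper lemmas for Statement 9 -/

section Statement9Helpers

open Finset Function

/-! ### Tropical arithmetic lemmas -/

lemma tropToReal_top' : tropToReal ⊤ = 0 := rfl

lemma tropToReal_coe' (r : ℝ) : tropToReal (r : WithTop ℝ) = Real.exp (-r) := rfl

lemma tropToReal_nonneg (w : WithTop ℝ) : 0 ≤ tropToReal w := by
  induction w using WithTop.recTopCoe with
  | top => exact le_refl 0
  | coe r => exact (Real.exp_pos _).le

lemma tropToReal_eq_zero_iff (w : WithTop ℝ) : tropToReal w = 0 ↔ w = ⊤ := by
  induction w using WithTop.recTopCoe with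
  | top => simp [tropToReal_top']
  | coe r =>
    simp only [tropToReal_coe']
    exact ⟨fun h => absurd h (Real.exp_pos _).ne', fun h => absurd h (WithTop.coe_ne_top)⟩

lemma tropToReal_pos_iff (w : WithTop ℝ) : 0 < tropToReal w ↔ w ≠ ⊤ := by
  constructor
  · intro h htop
    rw [htop, tropToReal_top'] at h
    exact lt_irrefl 0 h
  · intro h
    exact lt_of_le_of_ne (tropToReal_nonneg w)
      (fun he => h ((tropToReal_eq_zero_iff w).mp he.symm))

lemma tropToReal_add (a b : WithTop ℝ) :
    tropToReal (a + b) = tropToReal a * tropToReal b := by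
  induction a using WithTop.recTopCoe with
  | top => simp [tropToReal_top']
  | coe r =>
    induction b using WithTop.recTopCoe with
    | top => simp [tropToReal_top']
    | coe s =>
      rw [← WithTop.coe_add, tropToReal_coe', tropToReal_coe', tropToReal_coe',
        neg_add, Real.exp_add]

lemma tropToReal_le_iff {a b : WithTop ℝ} : tropToReal b ≤ tropToReal a ↔ a ≤ b := by
  induction a using WithTop.recTopCoe with
  | top =>
    induction b using WithTop.recTopCoe with
    | top => simp
    | coe s =>
      refine iff_of_false (fun h => ?_) (fun h => ?_)
      · exact absurd h (not_le.mpr (by rw [tropToReal_top', tropToReal_coe']; exact Real.exp_pos _))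
      · exact absurd h (by simp)
  | coe r =>
    induction b using WithTop.recTopCoe with
    | top => exact iff_of_true (by rw [tropToReal_top']; exact tropToReal_nonneg _) le_top
    | coe s =>
      rw [tropToReal_coe', tropToReal_coe', Real.exp_le_exp, neg_le_neg_iff,
        WithTop.coe_le_coe]

lemma negLogAbs_eq_top {x : ℝ} : negLogAbs x = ⊤ ↔ x = 0 := by
  unfold negLogAbs
  split
  · simpa
  · simp [*]

lemma tropToReal_negLogAbs (x : ℝ) : tropToReal (negLogAbs x) = |x| := by
  unfold negLogAbs
  split
  · simp [tropToReal_top', *]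
  · rw [tropToReal_coe', neg_neg, Real.exp_log (abs_pos.mpr (by assumption))]

lemma negLogAbs_unit_mul {c : ℝ} (hc : |c| = 1) (w : WithTop ℝ) :
    negLogAbs (c * tropToReal w) = w := by
  induction w using WithTop.recTopCoe with
  | top => rw [tropToReal_top', mul_zero]; unfold negLogAbs; rw [if_pos rfl]
  | coe r =>
    have hc0 : c ≠ 0 := fun h => by simp [h] at hc
    have hne : c * tropToReal (r : WithTop ℝ) ≠ 0 :=
      mul_ne_zero hc0 (by rw [tropToReal_coe']; exact (Real.exp_pos _).ne')
    unfold negLogAbs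
    rw [if_neg hne, abs_mul, hc, one_mul, tropToReal_coe',
      abs_of_pos (Real.exp_pos _), Real.log_exp, neg_neg]

/-! ### Real sign lemmas -/

lemma real_sign_mul (a b : ℝ) : Real.sign (a * b) = Real.sign a * Real.sign b := by
  rcases lt_trichotomy a 0 with ha | rfl | ha
  · rcases lt_trichotomy b 0 with hb | rfl | hb
    · rw [Real.sign_of_pos (mul_pos_of_neg_of_neg ha hb), Real.sign_of_neg ha,
        Real.sign_of_neg hb]; norm_num
    · simp
    · rw [Real.sign_of_neg (mul_neg_of_neg_of_pos ha hb), Real.sign_of_neg ha,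
        Real.sign_of_pos hb]; norm_num
  · simp
  · rcases lt_trichotomy b 0 with hb | rfl | hb
    · rw [Real.sign_of_neg (mul_neg_of_pos_of_neg ha hb), Real.sign_of_pos ha,
        Real.sign_of_neg hb]; norm_num
    · simp
    · rw [Real.sign_of_pos (mul_pos ha hb), Real.sign_of_pos ha,
        Real.sign_of_pos hb]; norm_num

lemma real_sign_neg_one_pow (k : ℕ) : Real.sign ((-1 : ℝ) ^ k) = (-1 : ℝ) ^ k := by
  rcases Nat.even_or_odd k with h | h
  · rw [h.neg_one_pow, Real.sign_one]
  · rw [h.neg_one_pow, show (-1 : ℝ) = -(1 : ℝ) by norm_num, Real.sign_neg, Real.sign_one]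

lemma real_sign_mul_abs (x : ℝ) : Real.sign x * |x| = x := by
  rcases lt_trichotomy x 0 with h | rfl | h
  · rw [Real.sign_of_neg h, abs_of_neg h]; ring
  · simp
  · rw [Real.sign_of_pos h, abs_of_pos h]; ring

/-! ### finsetTuple lemmas -/

variable {E : Type*} [LinearOrder E]

lemma finsetTuple_injective {d : ℕ} {B : Finset E} (h : B.card = d) :
    Function.Injective (finsetTuple B h) := fun i j hij =>
  (B.orderIsoOfFin h).injective (Subtype.ext hij)

lemma finsetTuple_mem {d : ℕ} {B : Finset E} (h : B.card = d) (i : Fin d) :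
    finsetTuple B h i ∈ B := (B.orderIsoOfFin h i).2

lemma image_finsetTuple {d : ℕ} {B : Finset E} (h : B.card = d) :
    Finset.image (finsetTuple B h) Finset.univ = B := by
  apply Finset.eq_of_subset_of_card_le
  · intro e he
    obtain ⟨i, -, rfl⟩ := Finset.mem_image.mp he
    exact finsetTuple_mem h i
  · rw [h, Finset.card_image_of_injective _ (finsetTuple_injective h), Finset.card_univ,
      Fintype.card_fin]

lemma card_image_univ_ne {d : ℕ} {z : Fin d → E} (hz : ¬ Function.Injective z) :
    (Finset.image z Finset.univ).card ≠ d := by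
  intro hc
  apply hz
  have h1 : (Finset.image z Finset.univ).card = (Finset.univ : Finset (Fin d)).card := by
    rw [hc, Finset.card_univ, Fintype.card_fin]
  have h2 := Finset.card_image_iff.mp h1
  intro i j hij
  exact h2 (by simp) (by simp) hij

lemma abs_evalOn {d : ℕ} {Φ : (Fin d → E) → ℝ} (hΦ : IsAlternating Φ) (z : Fin d → E) :
    |Φ z| = |evalOn Φ (Finset.image z Finset.univ)| := by
  by_cases hz : Function.Injective z
  · have hcard : (Finset.image z Finset.univ).card = d := by
      rw [Finset.card_image_of_injective _ hz, Finset.card_univ, Fintype.card_fin]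
    set B := Finset.image z Finset.univ with hB
    have hmem : ∀ i, z i ∈ B := fun i => Finset.mem_image.mpr ⟨i, Finset.mem_univ _, rfl⟩
    set g : Fin d → Fin d := fun i => (B.orderIsoOfFin hcard).symm ⟨z i, hmem i⟩ with hg
    have hginj : Function.Injective g := by
      intro i j hij
      apply hz
      have := (B.orderIsoOfFin hcard).symm.injective.eq_iff.mp hij
      exact congrArg Subtype.val this
    let σ : Equiv.Perm (Fin d) := Equiv.ofBijective g (Finite.injective_iff_bijective.mp hginj)
    have hcomp : finsetTuple B hcard ∘ σ = z := by
      funext i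
      show ((B.orderIsoOfFin hcard) ((B.orderIsoOfFin hcard).symm ⟨z i, hmem i⟩) : E) = z i
      rw [OrderIso.apply_symm_apply]
    have halt := hΦ.1 σ (finsetTuple B hcard)
    rw [hcomp] at halt
    rw [halt, evalOn, dif_pos hcard, abs_mul]
    have hs : |((Equiv.Perm.sign σ : ℤ) : ℝ)| = 1 := by
      rcases Int.units_eq_one_or (Equiv.Perm.sign σ) with h | h <;> rw [h] <;> norm_num
    rw [hs, one_mul]
  · rw [hΦ.2 z hz, evalOn, dif_neg (card_image_univ_ne hz)]

/-! ### Images of the tuples appearing in `delTerm` -/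

lemma image_comp_succAbove {d : ℕ} (X : Fin (d + 1) → E) (hX : Function.Injective X)
    (i : Fin (d + 1)) :
    Finset.image (X ∘ i.succAbove) Finset.univ = (Finset.image X Finset.univ).erase (X i) := by
  ext e
  constructor
  · intro he
    obtain ⟨j, -, rfl⟩ := Finset.mem_image.mp he
    refine Finset.mem_erase.mpr ⟨fun h => ?_, Finset.mem_image.mpr ⟨_, Finset.mem_univ _, rfl⟩⟩
    exact Fin.succAbove_ne i j (hX h)
  · intro he
    obtain ⟨hne, hmem⟩ := Finset.mem_erase.mp he
    obtain ⟨k, -, rfl⟩ := Finset.mem_image.mp hmem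
    have hki : k ≠ i := fun h => hne (by rw [h])
    obtain ⟨z, hz⟩ := Fin.exists_succAbove_eq hki
    exact Finset.mem_image.mpr ⟨z, Finset.mem_univ _, by rw [Function.comp_apply, hz]⟩

lemma image_cons_cast {d n : ℕ} (hn : d = n + 1) (a : E) (Y : Fin n → E) :
    Finset.image (Fin.cons a Y ∘ Fin.cast hn) Finset.univ
      = insert a (Finset.image Y Finset.univ) := by
  subst hn
  ext e
  simp only [Finset.mem_image, Finset.mem_insert, Finset.mem_univ, true_and,
    Function.comp_apply]
  constructor
  · rintro ⟨j, rfl⟩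
    rcases Fin.eq_zero_or_eq_succ (Fin.cast rfl j) with h | ⟨k, h⟩
    · rw [h, Fin.cons_zero]; exact Or.inl rfl
    · rw [h, Fin.cons_succ]; exact Or.inr ⟨k, rfl⟩
  · rintro (rfl | ⟨k, rfl⟩)
    · exact ⟨0, rfl⟩
    · exact ⟨k.succ, rfl⟩

lemma cons_not_injective {d n : ℕ} (hn : d = n + 1) (a : E) (Y : Fin n → E)
    (ha : a ∈ Finset.image Y Finset.univ) :
    ¬ Function.Injective (Fin.cons a Y ∘ Fin.cast hn) := by
  subst hn
  obtain ⟨j, -, hj⟩ := Finset.mem_image.mp ha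
  intro hinj
  have h0 : (Fin.cons a Y : Fin (n + 1) → E) (Fin.cast rfl (0 : Fin (n + 1)))
      = (Fin.cons a Y : Fin (n + 1) → E) (Fin.cast rfl j.succ) := by
    have e1 : Fin.cast rfl (0 : Fin (n + 1)) = 0 := rfl
    have e2 : Fin.cast rfl j.succ = j.succ := rfl
    rw [e1, e2, Fin.cons_zero, Fin.cons_succ]
    exact hj.symm
  have h1 : (0 : Fin (n + 1)) = j.succ := hinj h0
  exact Fin.succ_ne_zero j h1.symm

/-! ### delTerm lemmas -/

lemma tropOf_eq_top_of_card {d : ℕ} {Φ : (Fin d → E) → ℝ} {B : Finset E}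
    (h : B.card ≠ d) : tropOf Φ B = ⊤ := by
  rw [tropOf, evalOn, dif_neg h]
  unfold negLogAbs
  rw [if_pos rfl]

lemma abs_delTerm {d n : ℕ} (hn : d = n + 1) {Φ : (Fin d → E) → ℝ}
    (hΦ : IsAlternating Φ) (X : Fin (d + 1) → E) (hX : Function.Injective X)
    (Y : Fin n → E) (i : Fin (d + 1)) :
    |delTerm hn Φ X Y i| =
      tropToReal (tropOf Φ ((Finset.image X Finset.univ).erase (X i)) +
        tropOf Φ (insert (X i) (Finset.image Y Finset.univ))) := by
  rw [delTerm, abs_mul, abs_mul, abs_pow, abs_neg, abs_one, one_pow, one_mul,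
    abs_evalOn hΦ (X ∘ i.succAbove), abs_evalOn hΦ (Fin.cons (X i) Y ∘ Fin.cast hn),
    image_comp_succAbove X hX i, image_cons_cast hn, tropToReal_add, tropOf, tropOf,
    tropToReal_negLogAbs, tropToReal_negLogAbs]

lemma sign_delTerm {d n : ℕ} (hn : d = n + 1) {Φ χ : (Fin d → E) → ℝ}
    (hs : ∀ x, Real.sign (Φ x) = χ x) (X : Fin (d + 1) → E) (Y : Fin n → E)
    (i : Fin (d + 1)) :
    Real.sign (delTerm hn Φ X Y i) = delTerm hn χ X Y i := by
  rw [delTerm, delTerm, real_sign_mul, real_sign_mul, real_sign_neg_one_pow, hs, hs]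

lemma abs_delTerm_chi_le_one {d n : ℕ} (hn : d = n + 1) {χ : (Fin d → E) → ℝ}
    (hval : ∀ x, χ x = -1 ∨ χ x = 0 ∨ χ x = 1) (X : Fin (d + 1) → E) (Y : Fin n → E)
    (i : Fin (d + 1)) : |delTerm hn χ X Y i| ≤ 1 := by
  rw [delTerm, abs_mul, abs_mul, abs_pow, abs_neg, abs_one, one_pow, one_mul]
  have h1 : ∀ x, |χ x| ≤ 1 := fun x => by rcases hval x with h | h | h <;> rw [h] <;> norm_num
  calc |χ (X ∘ i.succAbove)| * |χ (Fin.cons (X i) Y ∘ Fin.cast hn)|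
      ≤ 1 * 1 := mul_le_mul (h1 _) (h1 _) (abs_nonneg _) zero_le_one
    _ = 1 := one_mul 1

lemma delTerm_eq_zero_of_mem {d n : ℕ} (hn : d = n + 1) {χ : (Fin d → E) → ℝ}
    (halt : IsAlternating χ) (X : Fin (d + 1) → E) (Y : Fin n → E) (i : Fin (d + 1))
    (h : X i ∈ Finset.image Y Finset.univ) : delTerm hn χ X Y i = 0 := by
  rw [delTerm, halt.2 _ (cons_not_injective hn _ Y h), mul_zero]

end Statement9Helpers


/-- The candidate preimage of a tropical Plücker vector under `−log|·|`. -/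
noncomputable def invPhi {E : Type*} [LinearOrder E] (d : ℕ) (χ : (Fin d → E) → ℝ)
    (φ : {B : Finset E // B.card = d} → WithTop ℝ) : (Fin d → E) → ℝ :=
  fun x => χ x * tropToReal (extendTrop d φ (Finset.image x Finset.univ))

/-! ## Forward and inverse direction lemmas for Statement 9 -/

section Statement9Main

open Finset Function

variable {E : Type*} [LinearOrder E]

lemma evalOn_card_eq {d : ℕ} {B : Finset E} (h : B.card = d) (χ : (Fin d → E) → ℝ) :
    evalOn χ B = χ (finsetTuple B h) := dif_pos h

lemma evalOn_card_ne {d : ℕ} {B : Finset E} (h : ¬ B.card = d) (χ : (Fin d → E) → ℝ) :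
    evalOn χ B = 0 := dif_neg h

lemma extendTrop_card_eq {d : ℕ} (φ : {B : Finset E // B.card = d} → WithTop ℝ)
    {B : Finset E} (h : B.card = d) : extendTrop d φ B = φ ⟨B, h⟩ := dif_pos h

lemma extendTrop_card_ne {d : ℕ} (φ : {B : Finset E // B.card = d} → WithTop ℝ)
    {B : Finset E} (h : ¬ B.card = d) : extendTrop d φ B = ⊤ := dif_neg h

lemma negLogAbs_zero : negLogAbs 0 = ⊤ := by unfold negLogAbs; rw [if_pos rfl]

lemma chiSupp_true_iff {d : ℕ} (χ : (Fin d → E) → ℝ) (B : Finset E) :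
    chiSupp χ B = true ↔ evalOn χ B ≠ 0 := by
  unfold chiSupp
  split
  · exact iff_of_false Bool.false_ne_true (not_not.mpr ‹_›)
  · exact iff_of_true rfl ‹_›

lemma toCoords_apply {d : ℕ} (Φ : (Fin d → E) → ℝ) (B : {B : Finset E // B.card = d}) :
    toCoords d Φ B = Φ (finsetTuple B.1 B.2) := rfl

lemma chiSupp_iff_tropOf {d : ℕ} {Φ χ : (Fin d → E) → ℝ}
    (hs : ∀ x, Real.sign (Φ x) = χ x) {B : Finset E} (hB : B.card = d) :
    chiSupp χ B = true ↔ tropOf Φ B ≠ ⊤ := by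
  rw [chiSupp_true_iff, evalOn_card_eq hB, ← hs, tropOf, evalOn_card_eq hB, Ne, Ne,
    negLogAbs_eq_top, Real.sign_eq_zero_iff]

variable [Fintype E]

lemma tropPlucker_of_oriented {d : ℕ} (hd : 1 ≤ d) {Φ : (Fin d → E) → ℝ}
    (hΦ : IsOrientedTP d Φ) : IsTropPlucker d (tropOf Φ) := by
  obtain ⟨halt, ⟨x0, hx0⟩, hrel⟩ := hΦ
  constructor
  · have hinj : Function.Injective x0 := by
      by_contra h
      exact hx0 (halt.2 x0 h)
    refine ⟨Finset.image x0 Finset.univ, ?_, ?_⟩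
    · rw [Finset.card_image_of_injective _ hinj, Finset.card_univ, Fintype.card_fin]
    · rw [tropOf, Ne, negLogAbs_eq_top]
      intro h0
      apply hx0
      have h1 := abs_evalOn halt x0
      rw [h0, abs_zero, abs_eq_zero] at h1
      exact h1
  · intro X Y hX hY
    obtain ⟨n, hn⟩ : ∃ n, d = n + 1 := ⟨d - 1, by omega⟩
    have hYn : Y.card = n := by omega
    have hXinj := finsetTuple_injective hX
    have himg : Finset.image (finsetTuple X hX) Finset.univ = X := image_finsetTuple hX
    have himgY : Finset.image (finsetTuple Y hYn) Finset.univ = Y := image_finsetTuple hYn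
    have habs : ∀ k, |delTerm hn Φ (finsetTuple X hX) (finsetTuple Y hYn) k| =
        tropToReal (tropOf Φ (X.erase (finsetTuple X hX k)) +
          tropOf Φ (insert (finsetTuple X hX k) Y)) := by
      intro k
      rw [abs_delTerm hn halt (finsetTuple X hX) hXinj (finsetTuple Y hYn) k, himg, himgY]
    have hmemX : ∀ k, finsetTuple X hX k ∈ X := fun k => finsetTuple_mem hX k
    have hsurj : ∀ e ∈ X, ∃ k, finsetTuple X hX k = e := by
      intro e he
      rw [← himg] at he
      obtain ⟨k, -, hk⟩ := Finset.mem_image.mp he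
      exact ⟨k, hk⟩
    rcases hrel n hn (finsetTuple X hX) (finsetTuple Y hYn) with hz | ⟨ip, im, hip, him, hmax, hmax'⟩
    · have htop : ∀ e ∈ X, tropOf Φ (X.erase e) + tropOf Φ (insert e Y) = ⊤ := by
        intro e he
        obtain ⟨k, rfl⟩ := hsurj e he
        have h1 := habs k
        rw [hz k, abs_zero] at h1
        exact (tropToReal_eq_zero_iff _).mp h1.symm
      have hcard2 : 1 < (X \ Y).card := by
        have h1 := Finset.le_card_sdiff Y X
        omega
      obtain ⟨a, ha, b, hb, hab⟩ := Finset.one_lt_card.mp hcard2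
      refine ⟨a, ⟨ha, fun j hj => ?_⟩, b, ⟨hb, fun j hj => ?_⟩, hab⟩
      · rw [htop a (Finset.mem_sdiff.mp ha).1, htop j (Finset.mem_sdiff.mp hj).1]
      · rw [htop b (Finset.mem_sdiff.mp hb).1, htop j (Finset.mem_sdiff.mp hj).1]
    · have key : ∀ k, delTerm hn Φ (finsetTuple X hX) (finsetTuple Y hYn) k ≠ 0 →
          (∀ l, |delTerm hn Φ (finsetTuple X hX) (finsetTuple Y hYn) l| ≤
            |delTerm hn Φ (finsetTuple X hX) (finsetTuple Y hYn) k|) →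
          finsetTuple X hX k ∈ argminSet (tropOf Φ) X Y := by
        intro k hk hkmax
        have h2 : (0 : ℝ) < tropToReal (tropOf Φ (X.erase (finsetTuple X hX k)) +
            tropOf Φ (insert (finsetTuple X hX k) Y)) := by
          rw [← habs k]
          exact abs_pos.mpr hk
        have hSne := (tropToReal_pos_iff _).mp h2
        have hkY : finsetTuple X hX k ∉ Y := by
          intro hmem
          apply hSne
          have hcard : ¬ (insert (finsetTuple X hX k) Y).card = d := by
            rw [Finset.insert_eq_self.mpr hmem]; omega
          rw [tropOf_eq_top_of_card hcard, add_top]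
        refine ⟨Finset.mem_sdiff.mpr ⟨hmemX k, hkY⟩, ?_⟩
        intro j hj
        obtain ⟨l, rfl⟩ := hsurj j (Finset.mem_sdiff.mp hj).1
        apply tropToReal_le_iff.mp
        rw [← habs l, ← habs k]
        exact hkmax l
      have h1 := key ip (ne_of_gt hip) (fun l => (hmax l).trans (le_abs_self _))
      have h2 := key im (ne_of_lt him) (fun l => (hmax' l).trans (le_of_eq (abs_of_neg him).symm))
      have hipim : ip ≠ im := by
        intro h
        rw [h] at hip
        linarith
      exact ⟨_, h1, _, h2, fun h => hipim (hXinj h)⟩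

lemma invPhi_apply (d : ℕ) (χ : (Fin d → E) → ℝ)
    (φ : {B : Finset E // B.card = d} → WithTop ℝ) (x : Fin d → E) :
    invPhi d χ φ x = χ x * tropToReal (extendTrop d φ (Finset.image x Finset.univ)) := rfl

end Statement9Main


section Statement9KeyInv

open Finset Function

variable {E : Type*} [Fintype E] [LinearOrder E]

lemma key_inv {d : ℕ} (hd : 1 ≤ d) {χ : (Fin d → E) → ℝ} (hχ : IsChirotope d χ)
    {I : Finset E → Finset E → Set E} (hne : (Dset d χ I).Nonempty)
    {φ : {B : Finset E // B.card = d} → WithTop ℝ} (hφ : φ ∈ Cset d (chiSupp χ) I) :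
    invPhi d χ φ ∈ Dset d χ I := by
  obtain ⟨hval, haltχ, hχne, hexch⟩ := hχ
  obtain ⟨hTP, hmat, hargφ⟩ := hφ
  have hψtop : ∀ B : Finset E, ¬ B.card = d → extendTrop d φ B = ⊤ :=
    fun B hB => extendTrop_card_ne φ hB
  have hchi0 : ∀ z : Fin d → E, χ z = 0 → extendTrop d φ (Finset.image z Finset.univ) = ⊤ := by
    intro z hz
    by_cases hzi : Function.Injective z
    · have hcard : (Finset.image z Finset.univ).card = d := by
        rw [Finset.card_image_of_injective _ hzi, Finset.card_univ, Fintype.card_fin]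
      have hev : evalOn χ (Finset.image z Finset.univ) = 0 := by
        have h1 := abs_evalOn haltχ z
        rw [hz, abs_zero] at h1
        exact abs_eq_zero.mp h1.symm
      by_contra hne'
      have h2 := (hmat _ hcard).mpr hne'
      rw [chiSupp_true_iff] at h2
      exact h2 hev
    · exact hψtop _ (card_image_univ_ne hzi)
  have habs1 : ∀ z : Fin d → E, χ z ≠ 0 → |χ z| = 1 := by
    intro z hz
    rcases hval z with h | h | h
    · rw [h]; norm_num
    · exact absurd h hz
    · rw [h]; norm_num
  have hPhiAbs : ∀ z : Fin d → E,
      |invPhi d χ φ z| = tropToReal (extendTrop d φ (Finset.image z Finset.univ)) := by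
    intro z
    rw [invPhi_apply, abs_mul]
    by_cases hz : χ z = 0
    · rw [hz, abs_zero, zero_mul, hchi0 z hz, tropToReal_top']
    · rw [habs1 z hz, one_mul, abs_of_nonneg (tropToReal_nonneg _)]
  have hPhiSign : ∀ z, Real.sign (invPhi d χ φ z) = χ z := by
    intro z
    by_cases hz : χ z = 0
    · rw [invPhi_apply, hz, zero_mul, Real.sign_zero]
    · have hzi : Function.Injective z := by
        by_contra h
        exact hz (haltχ.2 z h)
      have hcard : (Finset.image z Finset.univ).card = d := by
        rw [Finset.card_image_of_injective _ hzi, Finset.card_univ, Fintype.card_fin]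
      have hev : evalOn χ (Finset.image z Finset.univ) ≠ 0 := by
        intro h
        apply hz
        have h1 := abs_evalOn haltχ z
        rw [h, abs_zero, abs_eq_zero] at h1
        exact h1
      have hnetop := (hmat _ hcard).mp ((chiSupp_true_iff χ _).mpr hev)
      have hpos : 0 < tropToReal (extendTrop d φ (Finset.image z Finset.univ)) :=
        (tropToReal_pos_iff _).mpr hnetop
      rw [invPhi_apply, real_sign_mul, Real.sign_of_pos hpos, mul_one]
      rcases hval z with h | h | h
      · rw [h, show (-1 : ℝ) = -(1 : ℝ) by norm_num, Real.sign_neg, Real.sign_one]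
      · exact absurd h hz
      · rw [h, Real.sign_one]
  have haltΦ : IsAlternating (invPhi d χ φ) := by
    constructor
    · intro σ x
      have himg : Finset.image (x ∘ σ) Finset.univ = Finset.image x Finset.univ := by
        ext e
        simp only [Finset.mem_image, Finset.mem_univ, true_and, Function.comp_apply]
        constructor
        · rintro ⟨i, rfl⟩; exact ⟨σ i, rfl⟩
        · rintro ⟨i, rfl⟩; exact ⟨σ.symm i, by rw [Equiv.apply_symm_apply]⟩
      rw [invPhi_apply, invPhi_apply, himg, haltχ.1 σ x]
      ring
    · intro x hx
      rw [invPhi_apply, haltχ.2 x hx, zero_mul]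
  have htropOf : tropOf (invPhi d χ φ) = extendTrop d φ := by
    funext B
    by_cases hB : B.card = d
    · rw [tropOf, evalOn_card_eq hB, invPhi_apply, image_finsetTuple hB]
      by_cases hc : χ (finsetTuple B hB) = 0
      · rw [hc, zero_mul]
        have h1 : extendTrop d φ B = ⊤ := by
          have h2 := hchi0 (finsetTuple B hB) hc
          rwa [image_finsetTuple hB] at h2
        rw [h1, negLogAbs_zero]
      · exact negLogAbs_unit_mul (habs1 _ hc) _
    · rw [tropOf, evalOn_card_ne hB, hψtop B hB, negLogAbs_zero]
  obtain ⟨Φ₀, ⟨halt₀, hne₀, hrel₀⟩, hsgn₀, harg₀⟩ := hne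
  refine ⟨⟨haltΦ, ?_, ?_⟩, hPhiSign, ?_⟩
  · -- not identically zero
    obtain ⟨B, hBd, hBtop⟩ := hTP.1
    refine ⟨finsetTuple B hBd, fun h0 => ?_⟩
    have h1 := hPhiAbs (finsetTuple B hBd)
    rw [h0, abs_zero, image_finsetTuple hBd] at h1
    exact hBtop ((tropToReal_eq_zero_iff _).mp h1.symm)
  · -- the oriented exchange relation
    intro n hn X Y
    by_cases hall : ∀ k, delTerm hn (invPhi d χ φ) X Y k = 0
    · exact Or.inl hall
    right
    push_neg at hall
    obtain ⟨i₀, hi₀⟩ := hall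
    set D : Fin (d + 1) → ℝ := fun k => delTerm hn χ X Y k with hD
    set u : Fin (d + 1) → ℝ := fun k =>
      tropToReal (extendTrop d φ (Finset.image (X ∘ k.succAbove) Finset.univ)) *
      tropToReal (extendTrop d φ (Finset.image (Fin.cons (X k) Y ∘ Fin.cast hn) Finset.univ))
      with hu
    have hTDu : ∀ k, delTerm hn (invPhi d χ φ) X Y k = D k * u k := by
      intro k
      rw [hD, hu]
      simp only [delTerm, invPhi_apply]
      ring
    have hune : ∀ k, 0 ≤ u k := by
      intro k
      rw [hu]
      exact mul_nonneg (tropToReal_nonneg _) (tropToReal_nonneg _)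
    have hDval : ∀ k, |D k| ≤ 1 := fun k => abs_delTerm_chi_le_one hn hval X Y k
    have hDi₀ : D i₀ ≠ 0 := by
      intro h
      apply hi₀
      rw [hTDu i₀, h, zero_mul]
    have hui₀ : 0 < u i₀ := by
      rcases lt_or_eq_of_le (hune i₀) with h | h
      · exact h
      · exfalso; apply hi₀; rw [hTDu i₀, ← h, mul_zero]
    rcases hexch n hn X Y with hz | ⟨⟨kp, hkp⟩, ⟨km, hkm⟩⟩
    · exact absurd (hz i₀) hDi₀
    have hkp' : D kp = 1 := hkp
    have hkm' : D km = -1 := hkm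
    by_cases hXinj : Function.Injective X
    · by_cases hYinj : Function.Injective Y
      · -- main case: X and Y both injective
        have hXscard : (Finset.image X Finset.univ).card = d + 1 := by
          rw [Finset.card_image_of_injective _ hXinj, Finset.card_univ, Fintype.card_fin]
        have hYscard : (Finset.image Y Finset.univ).card = n := by
          rw [Finset.card_image_of_injective _ hYinj, Finset.card_univ, Fintype.card_fin]
        have hYscard' : (Finset.image Y Finset.univ).card = d - 1 := by omega
        have hu_eq : ∀ k, u k = tropToReal
            (extendTrop d φ ((Finset.image X Finset.univ).erase (X k)) +
             extendTrop d φ (insert (X k) (Finset.image Y Finset.univ))) := by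
          intro k
          rw [hu]
          simp only []
          rw [image_comp_succAbove X hXinj k, image_cons_cast hn, tropToReal_add]
        have hmemX : ∀ k, X k ∈ Finset.image X Finset.univ :=
          fun k => Finset.mem_image.mpr ⟨k, Finset.mem_univ _, rfl⟩
        have hsurjX : ∀ e ∈ Finset.image X Finset.univ, ∃ k, X k = e := by
          intro e he
          obtain ⟨k, -, hk⟩ := Finset.mem_image.mp he
          exact ⟨k, hk⟩
        have hinsert_top : ∀ ξ : Finset E → WithTop ℝ,
            (∀ B : Finset E, ¬ B.card = d → ξ B = ⊤) →
            ∀ e, e ∈ Finset.image Y Finset.univ →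
              ξ (insert e (Finset.image Y Finset.univ)) = ⊤ := by
          intro ξ hξ e he
          apply hξ
          rw [Finset.insert_eq_self.mpr he]
          omega
        have hSi₀ : extendTrop d φ ((Finset.image X Finset.univ).erase (X i₀)) +
            extendTrop d φ (insert (X i₀) (Finset.image Y Finset.univ)) ≠ ⊤ := by
          rw [← tropToReal_pos_iff, ← hu_eq]
          exact hui₀
        have hi₀Y : X i₀ ∉ Finset.image Y Finset.univ := by
          intro h
          apply hSi₀
          rw [hinsert_top _ hψtop _ h, add_top]
        have hi₀XY : X i₀ ∈ Finset.image X Finset.univ \ Finset.image Y Finset.univ :=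
          Finset.mem_sdiff.mpr ⟨hmemX i₀, hi₀Y⟩
        have final : ∀ kp' km' : Fin (d + 1), D kp' = 1 → D km' = -1 →
            X kp' ∈ argminSet (extendTrop d φ) (Finset.image X Finset.univ)
              (Finset.image Y Finset.univ) →
            X km' ∈ argminSet (extendTrop d φ) (Finset.image X Finset.univ)
              (Finset.image Y Finset.univ) →
            ∃ ip im : Fin (d + 1), 0 < delTerm hn (invPhi d χ φ) X Y ip ∧
              delTerm hn (invPhi d χ φ) X Y im < 0 ∧
              (∀ k, |delTerm hn (invPhi d χ φ) X Y k| ≤ delTerm hn (invPhi d χ φ) X Y ip) ∧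
              ∀ k, |delTerm hn (invPhi d χ φ) X Y k| ≤ -delTerm hn (invPhi d χ φ) X Y im := by
          intro p m hDp hDm hpA hmA
          obtain ⟨hpXY, hpmin⟩ := hpA
          obtain ⟨hmXY, hmmin⟩ := hmA
          have hSp_le : ∀ k, extendTrop d φ ((Finset.image X Finset.univ).erase (X p)) +
              extendTrop d φ (insert (X p) (Finset.image Y Finset.univ)) ≤
              extendTrop d φ ((Finset.image X Finset.univ).erase (X k)) +
              extendTrop d φ (insert (X k) (Finset.image Y Finset.univ)) := by
            intro k
            by_cases hk : X k ∈ Finset.image Y Finset.univ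
            · rw [hinsert_top _ hψtop _ hk, add_top]; exact le_top
            · exact hpmin (X k) (Finset.mem_sdiff.mpr ⟨hmemX k, hk⟩)
          have hSeq : extendTrop d φ ((Finset.image X Finset.univ).erase (X p)) +
              extendTrop d φ (insert (X p) (Finset.image Y Finset.univ)) =
              extendTrop d φ ((Finset.image X Finset.univ).erase (X m)) +
              extendTrop d φ (insert (X m) (Finset.image Y Finset.univ)) :=
            le_antisymm (hpmin _ hmXY) (hmmin _ hpXY)
          have hSp_ne : extendTrop d φ ((Finset.image X Finset.univ).erase (X p)) +
              extendTrop d φ (insert (X p) (Finset.image Y Finset.univ)) ≠ ⊤ :=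
            ne_top_of_le_ne_top hSi₀ (hpmin _ hi₀XY)
          have hup : 0 < u p := by
            rw [hu_eq]
            exact (tropToReal_pos_iff _).mpr hSp_ne
          have huk_le : ∀ k, u k ≤ u p := by
            intro k
            rw [hu_eq, hu_eq]
            exact tropToReal_le_iff.mpr (hSp_le k)
          have hueq : u m = u p := by rw [hu_eq, hu_eq, hSeq]
          have hTp : delTerm hn (invPhi d χ φ) X Y p = u p := by
            rw [hTDu, hDp, one_mul]
          have hTm : delTerm hn (invPhi d χ φ) X Y m = -u p := by
            rw [hTDu, hDm, hueq]; ring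
          have hbound : ∀ k, |delTerm hn (invPhi d χ φ) X Y k| ≤ u p := by
            intro k
            rw [hTDu k, abs_mul, abs_of_nonneg (hune k)]
            calc |D k| * u k ≤ 1 * u k := mul_le_mul_of_nonneg_right (hDval k) (hune k)
              _ = u k := one_mul _
              _ ≤ u p := huk_le k
          refine ⟨p, m, ?_, ?_, ?_, ?_⟩
          · rw [hTp]; exact hup
          · rw [hTm]; linarith
          · intro k; rw [hTp]; exact hbound k
          · intro k; rw [hTm, neg_neg]; exact hbound k
        have habs₀ : ∀ k, |delTerm hn Φ₀ X Y k| = tropToReal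
            (tropOf Φ₀ ((Finset.image X Finset.univ).erase (X k)) +
             tropOf Φ₀ (insert (X k) (Finset.image Y Finset.univ))) :=
          fun k => abs_delTerm hn halt₀ X hXinj Y k
        have hsgn₀T : ∀ k, Real.sign (delTerm hn Φ₀ X Y k) = D k :=
          fun k => sign_delTerm hn hsgn₀ X Y k
        have harg₀' : argminSet (tropOf Φ₀) (Finset.image X Finset.univ)
            (Finset.image Y Finset.univ)
            = I (Finset.image X Finset.univ) (Finset.image Y Finset.univ) :=
          harg₀ _ _ hXscard hYscard'
        have hargφ' : argminSet (extendTrop d φ) (Finset.image X Finset.univ)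
            (Finset.image Y Finset.univ)
            = I (Finset.image X Finset.univ) (Finset.image Y Finset.univ) :=
          hargφ _ _ hXscard hYscard'
        rcases hrel₀ n hn X Y with h0 | ⟨ip, im, hip, him, hmax, hmax'⟩
        · -- all Φ₀-terms vanish
          have hS₀top : ∀ k : Fin (d + 1),
              tropOf Φ₀ ((Finset.image X Finset.univ).erase (X k)) +
              tropOf Φ₀ (insert (X k) (Finset.image Y Finset.univ)) = ⊤ := by
            intro k
            have h1 := habs₀ k
            rw [h0 k, abs_zero] at h1
            exact (tropToReal_eq_zero_iff _).mp h1.symm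
          have hargAll : ∀ e, e ∈ Finset.image X Finset.univ \ Finset.image Y Finset.univ →
              e ∈ argminSet (tropOf Φ₀) (Finset.image X Finset.univ)
                (Finset.image Y Finset.univ) := by
            intro e he
            refine ⟨he, fun j hj => ?_⟩
            obtain ⟨k, rfl⟩ := hsurjX e (Finset.mem_sdiff.mp he).1
            obtain ⟨l, rfl⟩ := hsurjX j (Finset.mem_sdiff.mp hj).1
            rw [hS₀top k, hS₀top l]
          have hkpY : X kp ∉ Finset.image Y Finset.univ := by
            intro h
            rw [delTerm_eq_zero_of_mem hn haltχ X Y kp h] at hkp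
            norm_num at hkp
          have hkmY : X km ∉ Finset.image Y Finset.univ := by
            intro h
            rw [delTerm_eq_zero_of_mem hn haltχ X Y km h] at hkm
            norm_num at hkm
          have hkpA : X kp ∈ argminSet (extendTrop d φ) (Finset.image X Finset.univ)
              (Finset.image Y Finset.univ) := by
            rw [hargφ', ← harg₀']
            exact hargAll _ (Finset.mem_sdiff.mpr ⟨hmemX kp, hkpY⟩)
          have hkmA : X km ∈ argminSet (extendTrop d φ) (Finset.image X Finset.univ)
              (Finset.image Y Finset.univ) := by
            rw [hargφ', ← harg₀']
            exact hargAll _ (Finset.mem_sdiff.mpr ⟨hmemX km, hkmY⟩)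
          exact final kp km hkp' hkm' hkpA hkmA
        · -- Φ₀ has a positive and a negative maximal term
          have hDip : D ip = 1 := by rw [← hsgn₀T ip]; exact Real.sign_of_pos hip
          have hDim : D im = -1 := by rw [← hsgn₀T im]; exact Real.sign_of_neg him
          have hS₀ip_pos : (0 : ℝ) < tropToReal
              (tropOf Φ₀ ((Finset.image X Finset.univ).erase (X ip)) +
               tropOf Φ₀ (insert (X ip) (Finset.image Y Finset.univ))) := by
            rw [← habs₀ ip]
            exact abs_pos.mpr (ne_of_gt hip)
          have hS₀im_pos : (0 : ℝ) < tropToReal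
              (tropOf Φ₀ ((Finset.image X Finset.univ).erase (X im)) +
               tropOf Φ₀ (insert (X im) (Finset.image Y Finset.univ))) := by
            rw [← habs₀ im]
            exact abs_pos.mpr (ne_of_lt him)
          have hipY : X ip ∉ Finset.image Y Finset.univ := by
            intro h
            have h1 := (tropToReal_pos_iff _).mp hS₀ip_pos
            apply h1
            rw [hinsert_top (tropOf Φ₀) (fun B hB => tropOf_eq_top_of_card hB) _ h, add_top]
          have himY : X im ∉ Finset.image Y Finset.univ := by
            intro h
            have h1 := (tropToReal_pos_iff _).mp hS₀im_pos
            apply h1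
            rw [hinsert_top (tropOf Φ₀) (fun B hB => tropOf_eq_top_of_card hB) _ h, add_top]
          have hipA : X ip ∈ argminSet (tropOf Φ₀) (Finset.image X Finset.univ)
              (Finset.image Y Finset.univ) := by
            refine ⟨Finset.mem_sdiff.mpr ⟨hmemX ip, hipY⟩, fun j hj => ?_⟩
            obtain ⟨l, rfl⟩ := hsurjX j (Finset.mem_sdiff.mp hj).1
            apply tropToReal_le_iff.mp
            rw [← habs₀ l, ← habs₀ ip]
            exact (hmax l).trans (le_abs_self _)
          have himA : X im ∈ argminSet (tropOf Φ₀) (Finset.image X Finset.univ)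
              (Finset.image Y Finset.univ) := by
            refine ⟨Finset.mem_sdiff.mpr ⟨hmemX im, himY⟩, fun j hj => ?_⟩
            obtain ⟨l, rfl⟩ := hsurjX j (Finset.mem_sdiff.mp hj).1
            apply tropToReal_le_iff.mp
            rw [← habs₀ l, ← habs₀ im]
            exact (hmax' l).trans (le_of_eq (abs_of_neg him).symm)
          refine final ip im hDip hDim ?_ ?_
          · rw [hargφ', ← harg₀']; exact hipA
          · rw [hargφ', ← harg₀']; exact himA
      · -- Y is not injective: every term vanishes, contradiction
        exfalso
        apply hi₀
        have h1 : extendTrop d φ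
            (Finset.image (Fin.cons (X i₀) Y ∘ Fin.cast hn) Finset.univ) = ⊤ := by
          apply hψtop
          rw [image_cons_cast hn]
          have h2 : (Finset.image Y Finset.univ).card ≠ n := card_image_univ_ne hYinj
          have h3 : (Finset.image Y Finset.univ).card ≤ n := by
            have h4 := Finset.card_image_le (f := Y) (s := Finset.univ)
            rwa [Finset.card_univ, Fintype.card_fin] at h4
          have h5 := Finset.card_insert_le (X i₀) (Finset.image Y Finset.univ)
          omega
        have hu0 : u i₀ = 0 := by
          rw [hu]
          simp only []
          rw [h1, tropToReal_top', mul_zero]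
        rw [hTDu i₀, hu0, mul_zero]
    · -- X is not injective
      rw [Function.not_injective_iff] at hXinj
      obtain ⟨a, b, hXab, hab⟩ := hXinj
      have hnotinj : ∀ k : Fin (d + 1), k ≠ a → k ≠ b →
          ¬ Function.Injective (X ∘ k.succAbove) := by
        intro k hka hkb hinj
        obtain ⟨a', ha'⟩ := Fin.exists_succAbove_eq (Ne.symm hka)
        obtain ⟨b', hb'⟩ := Fin.exists_succAbove_eq (Ne.symm hkb)
        have hab' : a' ≠ b' := by
          intro h
          apply hab
          rw [← ha', ← hb', h]
        apply hab'
        apply hinj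
        show X (k.succAbove a') = X (k.succAbove b')
        rw [ha', hb', hXab]
      have hD0 : ∀ k, k ≠ a → k ≠ b → D k = 0 := by
        intro k hka hkb
        have h1 : χ (X ∘ k.succAbove) = 0 := haltχ.2 _ (hnotinj k hka hkb)
        rw [hD]
        simp only [delTerm, h1]
        ring
      have hT0 : ∀ k, k ≠ a → k ≠ b → delTerm hn (invPhi d χ φ) X Y k = 0 := by
        intro k hka hkb
        rw [hTDu k, hD0 k hka hkb, zero_mul]
      have himg : ∀ p q : Fin (d + 1), p ≠ q → X p = X q →
          Finset.image (X ∘ p.succAbove) Finset.univ = Finset.image X Finset.univ := by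
        intro p q hpq hXpq
        apply Finset.Subset.antisymm
        · intro e he
          obtain ⟨j, -, rfl⟩ := Finset.mem_image.mp he
          exact Finset.mem_image.mpr ⟨p.succAbove j, Finset.mem_univ _, rfl⟩
        · intro e he
          obtain ⟨k, -, rfl⟩ := Finset.mem_image.mp he
          by_cases hk : k = p
          · subst hk
            obtain ⟨z, hz⟩ := Fin.exists_succAbove_eq (Ne.symm hpq)
            refine Finset.mem_image.mpr ⟨z, Finset.mem_univ _, ?_⟩
            show X (k.succAbove z) = X k
            rw [hz, ← hXpq]
          · obtain ⟨z, hz⟩ := Fin.exists_succAbove_eq hk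
            refine Finset.mem_image.mpr ⟨z, Finset.mem_univ _, ?_⟩
            show X (p.succAbove z) = X k
            rw [hz]
      have huab : u a = u b := by
        rw [hu]
        simp only []
        rw [himg a b hab hXab, himg b a (Ne.symm hab) hXab.symm, hXab]
      have hu_all : ∀ k, k = a ∨ k = b → u k = u a := by
        rintro k (rfl | rfl)
        · rfl
        · exact huab.symm
      have hOr : ∀ k, D k ≠ 0 → k = a ∨ k = b := by
        intro k hk
        by_contra h
        push_neg at h
        exact hk (hD0 k h.1 h.2)
      have hkp_ab : kp = a ∨ kp = b := hOr kp (by rw [hkp']; norm_num)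
      have hkm_ab : km = a ∨ km = b := hOr km (by rw [hkm']; norm_num)
      have hi₀ab : i₀ = a ∨ i₀ = b := hOr i₀ hDi₀
      have hua_pos : 0 < u a := by
        have := hu_all i₀ hi₀ab
        rw [← this]
        exact hui₀
      have hbound : ∀ k, |delTerm hn (invPhi d χ φ) X Y k| ≤ u a := by
        intro k
        by_cases hka : k = a
        · rw [hTDu k, abs_mul, abs_of_nonneg (hune k), hu_all k (Or.inl hka)]
          calc |D k| * u a ≤ 1 * u a := mul_le_mul_of_nonneg_right (hDval k) hua_pos.le
            _ = u a := one_mul _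
        · by_cases hkb : k = b
          · rw [hTDu k, abs_mul, abs_of_nonneg (hune k), hu_all k (Or.inr hkb)]
            calc |D k| * u a ≤ 1 * u a := mul_le_mul_of_nonneg_right (hDval k) hua_pos.le
              _ = u a := one_mul _
          · rw [hT0 k hka hkb, abs_zero]
            exact hua_pos.le
      have hTkp : delTerm hn (invPhi d χ φ) X Y kp = u a := by
        rw [hTDu, hkp', one_mul, hu_all kp hkp_ab]
      have hTkm : delTerm hn (invPhi d χ φ) X Y km = -u a := by
        rw [hTDu, hkm', hu_all km hkm_ab]
        ring
      refine ⟨kp, km, ?_, ?_, ?_, ?_⟩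
      · rw [hTkp]; exact hua_pos
      · rw [hTkm]; linarith
      · intro k; rw [hTkp]; exact hbound k
      · intro k; rw [hTkm, neg_neg]; exact hbound k
  · -- the initial datum condition
    intro X Y hX hY
    rw [htropOf]
    exact hargφ X Y hX hY

end Statement9KeyInv

/-! ## Statement 9 -/

theorem statement9 {E : Type*} [Fintype E] [LinearOrder E] (d : ℕ) (hd : 1 ≤ d)
    (χ : (Fin d → E) → ℝ) (hχ : IsChirotope d χ)
    (I : Finset E → Finset E → Set E) (hI : ∀ X Y : Finset E, I X Y ⊆ ↑(X \ Y))
    (hne : (Dset d χ I).Nonempty) :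
    letI : TopologicalSpace (WithTop ℝ) := TopologicalSpace.induced tropToReal inferInstance
    ∃ e : ↥(DsetCoords d χ I) ≃ₜ ↥(Cset d (chiSupp χ) I),
      ∀ f : ↥(DsetCoords d χ I),
        ((e f : ↥(Cset d (chiSupp χ) I)) : {B : Finset E // B.card = d} → WithTop ℝ) =
          fun B => negLogAbs ((f : {B : Finset E // B.card = d} → ℝ) B) := by
  classical
  letI : TopologicalSpace (WithTop ℝ) := TopologicalSpace.induced tropToReal inferInstance
  have hFmem : ∀ f ∈ DsetCoords d χ I,
      (fun B : {B : Finset E // B.card = d} => negLogAbs (f B)) ∈ Cset d (chiSupp χ) I := by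
    rintro f ⟨Φ, ⟨hOTP, hsgn, harg⟩, rfl⟩
    have hext : extendTrop d
        (fun B : {B : Finset E // B.card = d} => negLogAbs (toCoords d Φ B)) = tropOf Φ := by
      funext B
      by_cases hB : B.card = d
      · rw [extendTrop_card_eq _ hB, toCoords_apply, tropOf, evalOn_card_eq hB]
      · rw [extendTrop_card_ne _ hB, tropOf, evalOn_card_ne hB, negLogAbs_zero]
    show IsInC d (chiSupp χ) I _
    rw [hext]
    exact ⟨tropPlucker_of_oriented hd hOTP,
      fun B hB => chiSupp_iff_tropOf hsgn hB, harg⟩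
  have hGmem : ∀ φ ∈ Cset d (chiSupp χ) I,
      (fun B : {B : Finset E // B.card = d} => evalOn χ B.1 * tropToReal (φ B)) ∈
        DsetCoords d χ I := by
    intro φ hφ
    refine ⟨invPhi d χ φ, key_inv hd hχ hne hφ, ?_⟩
    funext B
    rw [toCoords_apply, invPhi_apply, image_finsetTuple B.2, evalOn_card_eq B.2,
      extendTrop_card_eq _ B.2]
  refine ⟨{ toFun := fun f => ⟨fun B => negLogAbs (f.1 B), hFmem f.1 f.2⟩
            invFun := fun φ => ⟨fun B => evalOn χ B.1 * tropToReal (φ.1 B), hGmem φ.1 φ.2⟩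
            left_inv := ?_
            right_inv := ?_
            continuous_toFun := ?_
            continuous_invFun := ?_ }, fun f => rfl⟩
  · -- left inverse
    intro f
    apply Subtype.ext
    funext B
    show evalOn χ B.1 * tropToReal (negLogAbs (f.1 B)) = f.1 B
    obtain ⟨Φ, ⟨hOTP, hsgn, harg⟩, hf⟩ := f.2
    have h1 : evalOn χ B.1 = Real.sign (f.1 B) := by
      rw [← hf, toCoords_apply, hsgn, evalOn_card_eq B.2]
    rw [tropToReal_negLogAbs, h1, real_sign_mul_abs]
  · -- right inverse
    intro φ
    apply Subtype.ext
    funext B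
    show negLogAbs (evalOn χ B.1 * tropToReal (φ.1 B)) = φ.1 B
    obtain ⟨hTP, hmat, harg⟩ := φ.2
    have hiff := hmat B.1 B.2
    rw [extendTrop_card_eq _ B.2, chiSupp_true_iff] at hiff
    by_cases h : evalOn χ B.1 = 0
    · have htop : φ.1 B = ⊤ := by
        by_contra hne'
        exact (hiff.mpr hne') h
      rw [h, zero_mul, htop, negLogAbs_zero]
    · have habs1 : |evalOn χ B.1| = 1 := by
        rw [evalOn_card_eq B.2] at h ⊢
        rcases hχ.1 (finsetTuple B.1 B.2) with hc | hc | hc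
        · rw [hc]; norm_num
        · exact absurd hc h
        · rw [hc]; norm_num
      exact negLogAbs_unit_mul habs1 _
  · -- continuity of the forward map
    apply Continuous.subtype_mk
    apply continuous_pi
    intro B
    apply continuous_induced_rng.mpr
    have heq : (tropToReal ∘ fun f : ↥(DsetCoords d χ I) =>
        negLogAbs ((f : {B : Finset E // B.card = d} → ℝ) B)) =
        fun f : ↥(DsetCoords d χ I) => |(f : {B : Finset E // B.card = d} → ℝ) B| := by
      funext f
      exact tropToReal_negLogAbs _
    rw [heq]
    exact continuous_abs.comp ((continuous_apply B).comp continuous_subtype_val)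
  · -- continuity of the inverse map
    apply Continuous.subtype_mk
    apply continuous_pi
    intro B
    exact continuous_const.mul
      (continuous_induced_dom.comp ((continuous_apply B).comp continuous_subtype_val))
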